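/- Let Λ be a rank-r graph, V = (V_λ)_{λ∈Λ} a Λ-contraction on a complex Hilbert space H, and s ∈ (0,1) such that the defect operator Δ_s(V) is positive. Then the map W_s : H → ℓ²(Λ; H) defined by W_s(ξ) = (s^{|λ|} Δ_s(V)^{1/2} V_λ* ξ)_{λ∈Λ} is a well-defined linear isometry into the Hilbert space ℓ²(Λ; H) of square-summable H-valued families indexed by the morphisms of Λ. -/

import Mathlib

open scoped ComplexOrder
open ContinuousLinearMap

noncomputable section

universe u

/-- A rank-`r` graph: a countable small category whose morphisms form `Λ`, objects being
identified with degree-zero morphisms, equipped with a degree functor into `ℕ^r`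
satisfying the unique factorisation property. -/
structure KGraph (r : ℕ) where
  Λ : Type
  countable : Countable Λ
  src : Λ → Λ
  tgt : Λ → Λ
  deg : Λ → Fin r → ℕ
  comp : Λ → Λ → Λ
  deg_src : ∀ l, deg (src l) = 0
  deg_tgt : ∀ l, deg (tgt l) = 0
  src_eq_self : ∀ l, deg l = 0 → src l = l
  tgt_eq_self : ∀ l, deg l = 0 → tgt l = l
  comp_src_self : ∀ l, comp l (src l) = l
  tgt_comp_self : ∀ l, comp (tgt l) l = l
  src_comp : ∀ l m, src l = tgt m → src (comp l m) = src m
  tgt_comp : ∀ l m, src l = tgt m → tgt (comp l m) = tgt l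
  deg_comp : ∀ l m, src l = tgt m → deg (comp l m) = deg l + deg m
  comp_assoc : ∀ l m n, src l = tgt m → src m = tgt n →
    comp (comp l m) n = comp l (comp m n)
  factorisation : ∀ (l : Λ) (m n : Fin r → ℕ), deg l = m + n →
    ∃! p : Λ × Λ, deg p.1 = m ∧ deg p.2 = n ∧ src p.1 = tgt p.2 ∧ comp p.1 p.2 = l

namespace KGraph

variable {r : ℕ} (K : KGraph r)

/-- `|λ|`, the total degree of a morphism. -/
def degSum (l : K.Λ) : ℕ := ∑ j, K.deg l j

/-- The vertices `Λ⁰`, i.e. the degree-zero morphisms. -/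
def IsVertex (l : K.Λ) : Prop := K.deg l = 0

/-- The pairs `(α, β)` describing the elements `μα = νβ` of `MCE(μ, ν)`. -/
def MCEPair (μ ν : K.Λ) (p : K.Λ × K.Λ) : Prop :=
  K.src μ = K.tgt p.1 ∧ K.src ν = K.tgt p.2 ∧ K.comp μ p.1 = K.comp ν p.2 ∧
    K.deg (K.comp μ p.1) = K.deg μ ⊔ K.deg ν

/-- `Λ` is finitely aligned. -/
def FinitelyAligned : Prop := ∀ μ ν : K.Λ, {p : K.Λ × K.Λ | K.MCEPair μ ν p}.Finite

/-- `Λ` is row-finite. -/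
def RowFinite : Prop :=
  ∀ (n : Fin r → ℕ) (a : K.Λ), {l : K.Λ | K.deg l = n ∧ K.tgt l = a}.Finite

/-- `Λ` is a finite graph: each `Λ^n` is finite. -/
def FiniteGraph : Prop := ∀ n : Fin r → ℕ, {l : K.Λ | K.deg l = n}.Finite

/-- `Λ` has no sources. -/
def NoSources : Prop :=
  ∀ a : K.Λ, K.IsVertex a → ∀ n : Fin r → ℕ, ∃ l, K.deg l = n ∧ K.tgt l = a

/-- `Λ` is cofinal. -/
def Cofinal : Prop := ∀ a : K.Λ, K.IsVertex a → ∃ l, K.deg l ≠ 0 ∧ K.tgt l = a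

end KGraph

section Families

variable {r : ℕ} (K : KGraph r)
variable {H : Type u} [NormedAddCommGroup H] [InnerProductSpace ℂ H] [CompleteSpace H]

/-- A `Λ`-contraction on a Hilbert space `H`. -/
def IsLambdaContraction (V : K.Λ → H →L[ℂ] H) : Prop :=
  (∀ l m, K.src l ≠ K.tgt m → V l ∘L V m = 0) ∧
  (∀ l m, K.src l = K.tgt m → V l ∘L V m = V (K.comp l m)) ∧
  (∀ (n : Fin r → ℕ) (F : Finset K.Λ), (∀ l ∈ F, K.deg l = n) →
    ((1 : H →L[ℂ] H) - ∑ l ∈ F, V l ∘L adjoint (V l)).IsPositive) ∧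
  (∀ a, K.IsVertex a → IsSelfAdjoint (V a) ∧ V a ∘L V a = V a) ∧
  (∀ ξ : H, HasSum (fun a : {a : K.Λ // K.IsVertex a} => V a.1 ξ) ξ)

/-- A `Λ`-isometry on a Hilbert space `H`. -/
def IsLambdaIsometry (V : K.Λ → H →L[ℂ] H) : Prop :=
  IsLambdaContraction K V ∧
  ∀ (n : Fin r → ℕ) (ξ : H),
    HasSum (fun l : {l : K.Λ // K.deg l = n} => V l.1 (adjoint (V l.1) ξ)) ξ

/-- `D` is the defect operator `Δ_s(V)` (a strong-operator-topology sum). -/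
def IsDefectOperator (V : K.Λ → H →L[ℂ] H) (s : ℝ) (D : H →L[ℂ] H) : Prop :=
  ∀ ξ : H, HasSum
    (fun m : {m : K.Λ // K.deg m ≤ 1} =>
      (((-(s ^ 2)) ^ K.degSum m.1 : ℝ) : ℂ) • V m.1 (adjoint (V m.1) ξ)) (D ξ)

/-- The Popescu condition for a `Λ`-contraction. -/
def PopescuCondition (V : K.Λ → H →L[ℂ] H) : Prop :=
  ∃ ρ ∈ Set.Ioo (0 : ℝ) 1, ∀ s ∈ Set.Ioo ρ 1,
    ∃ D : H →L[ℂ] H, IsDefectOperator K V s D ∧ D.IsPositive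

/-- A Toeplitz-Cuntz-Krieger `Λ`-family. -/
def IsTCKFamily (W : K.Λ → H →L[ℂ] H) : Prop :=
  (∀ l, W l ∘L adjoint (W l) ∘L W l = W l) ∧
  (∀ a, K.IsVertex a → IsSelfAdjoint (W a) ∧ W a ∘L W a = W a) ∧
  (∀ a b, K.IsVertex a → K.IsVertex b → a ≠ b → W a ∘L W b = 0) ∧
  (∀ l m, K.src l = K.tgt m → W l ∘L W m = W (K.comp l m)) ∧
  (∀ l, adjoint (W l) ∘L W l = W (K.src l)) ∧
  (∀ n : Fin r → ℕ, n ≠ 0 → ∀ a, K.IsVertex a → ∀ F : Finset K.Λ,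
    (∀ l ∈ F, K.deg l = n ∧ K.tgt l = a) →
    (W a - ∑ l ∈ F, W l ∘L adjoint (W l)).IsPositive) ∧
  (∀ μ ν : K.Λ, ∀ ξ : H,
    HasSum (fun p : {p : K.Λ × K.Λ // K.MCEPair μ ν p} => W p.1.1 (adjoint (W p.1.2) ξ))
      (adjoint (W μ) (W ν ξ)))

/-- A Cuntz-Pimsner `Λ`-family. -/
def IsCPFamily (W : K.Λ → H →L[ℂ] H) : Prop :=
  IsTCKFamily K W ∧
  ∀ n : Fin r → ℕ, n ≠ 0 → ∀ a, K.IsVertex a → ∀ ξ : H,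
    HasSum (fun l : {l : K.Λ // K.deg l = n ∧ K.tgt l = a} => W l.1 (adjoint (W l.1) ξ))
      (W a ξ)

end Families

section Creation

variable {r : ℕ}

/-- The Fock space `ℓ²(Λ)` of a higher-rank graph. -/
abbrev FockSpace (K : KGraph r) : Type := lp (fun _ : K.Λ => ℂ) 2

/-- `L` is the family of creation operators on `ℓ²(Λ)`:
`L_λ δ_μ = δ_{λμ}` if `s(λ) = r(μ)` and `L_λ δ_μ = 0` otherwise. -/
def IsCreationFamily (K : KGraph r) [DecidableEq K.Λ]
    (L : K.Λ → FockSpace K →L[ℂ] FockSpace K) : Prop :=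
  ∀ l m : K.Λ,
    (K.src l = K.tgt m → L l (lp.single 2 m 1) = lp.single 2 (K.comp l m) 1) ∧
    (K.src l ≠ K.tgt m → L l (lp.single 2 m 1) = 0)

end Creation

section PoissonHelpers

open Finset Filter Topology

variable {r : ℕ}

private def cubeF (r : ℕ) : Finset (Fin r → ℕ) := Fintype.piFinset fun _ => Finset.range 2

private def boxF (N : Fin r → ℕ) : Finset (Fin r → ℕ) :=
  Fintype.piFinset fun i => Finset.range (N i + 1)

private lemma indic_prod (k n m : Fin r → ℕ) :
    (if k = n + m then (1:ℝ) else 0) = ∏ i, (if k i = n i + m i then (1:ℝ) else 0) := by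
  rw [Finset.prod_boole]
  congr 1
  simp [funext_iff, eq_iff_iff]

private lemma g_eval (a N t : ℕ) :
    (∑ x ∈ Finset.range (N + 1), if a = x + t then (1:ℝ) else 0)
      = if t ≤ a ∧ a ≤ N + t then 1 else 0 := by
  by_cases h : t ≤ a ∧ a ≤ N + t
  · rw [if_pos h, Finset.sum_eq_single_of_mem (a - t)
      (by simp only [Finset.mem_range]; omega)
      (fun b _ hb => by rw [if_neg (by omega)]), if_pos (by omega)]
  · rw [if_neg h]
    apply Finset.sum_eq_zero
    intro x hx
    simp only [Finset.mem_range] at hx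
    rw [if_neg (by omega)]

private lemma coord_eval (a N : ℕ) :
    (∑ t ∈ Finset.range 2, (-1:ℝ)^t * if t ≤ a ∧ a ≤ N + t then 1 else 0)
      = (if a = 0 then (1:ℝ) else 0) - (if a = N + 1 then 1 else 0) := by
  rw [Finset.sum_range_succ, Finset.sum_range_one]
  rcases Nat.eq_zero_or_pos a with h | h
  · subst h
    rw [if_pos (by omega), if_neg (by omega), if_pos rfl, if_neg (by omega)]
    ring
  · rcases le_or_gt a N with h2 | h2
    · rw [if_pos (by omega), if_pos (by omega), if_neg (by omega), if_neg (by omega)]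
      ring
    · rcases eq_or_lt_of_le (show N + 1 ≤ a by omega) with h3 | h3
      · rw [if_neg (by omega), if_pos (by omega), if_neg (by omega), if_pos h3.symm]
        ring
      · rw [if_neg (by omega), if_neg (by omega), if_neg (by omega), if_neg (by omega)]
        ring

private lemma coord_eval2 (a N : ℕ) :
    (∑ t ∈ Finset.range 2, (-1:ℝ)^t * if a = t * (N + 1) then 1 else 0)
      = (if a = 0 then (1:ℝ) else 0) - (if a = N + 1 then 1 else 0) := by
  rw [Finset.sum_range_succ, Finset.sum_range_one]
  simp only [pow_zero, pow_one, zero_mul, one_mul]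
  ring

private lemma box_tele (G : (Fin r → ℕ) → ℝ) (N : Fin r → ℕ) :
    ∑ n ∈ boxF N, ∑ m ∈ cubeF r, (-1:ℝ)^(∑ i, m i) * G (n + m)
    = ∑ ε ∈ cubeF r, (-1:ℝ)^(∑ i, ε i) * G (fun i => ε i * (N i + 1)) := by
  classical
  set K : Finset (Fin r → ℕ) := Fintype.piFinset fun i => Finset.range (N i + 2) with hK
  set c : (Fin r → ℕ) → ℝ := fun k =>
    ∏ i, ((if k i = 0 then (1:ℝ) else 0) - (if k i = N i + 1 then 1 else 0)) with hc
  have hLHS : ∑ n ∈ boxF N, ∑ m ∈ cubeF r, (-1:ℝ)^(∑ i, m i) * G (n + m)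
      = ∑ k ∈ K, c k * G k := by
    have step1 : ∀ n ∈ boxF N, ∀ m ∈ cubeF r,
        G (n + m) = ∑ k ∈ K, if k = n + m then G k else 0 := by
      intro n hn m hm
      rw [Finset.sum_ite_eq' K (n + m) G, if_pos]
      simp only [boxF, cubeF, hK, Fintype.mem_piFinset, Finset.mem_range] at *
      intro i
      have h1 := hn i
      have h2 := hm i
      simp only [Pi.add_apply]
      omega
    calc ∑ n ∈ boxF N, ∑ m ∈ cubeF r, (-1:ℝ)^(∑ i, m i) * G (n + m)
        = ∑ n ∈ boxF N, ∑ m ∈ cubeF r, ∑ k ∈ K,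
            (-1:ℝ)^(∑ i, m i) * ((if k = n + m then (1:ℝ) else 0) * G k) := by
          apply Finset.sum_congr rfl; intro n hn
          apply Finset.sum_congr rfl; intro m hm
          rw [step1 n hn m hm, Finset.mul_sum]
          apply Finset.sum_congr rfl; intro k _
          by_cases h : k = n + m <;> simp [h]
      _ = ∑ n ∈ boxF N, ∑ k ∈ K, ∑ m ∈ cubeF r,
            (-1:ℝ)^(∑ i, m i) * ((if k = n + m then (1:ℝ) else 0) * G k) := by
          apply Finset.sum_congr rfl; intro n _
          exact Finset.sum_comm
      _ = ∑ k ∈ K, ∑ n ∈ boxF N, ∑ m ∈ cubeF r,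
            (-1:ℝ)^(∑ i, m i) * ((if k = n + m then (1:ℝ) else 0) * G k) := by
          exact Finset.sum_comm
      _ = ∑ k ∈ K, ∑ m ∈ cubeF r, ∑ n ∈ boxF N,
            (-1:ℝ)^(∑ i, m i) * ((if k = n + m then (1:ℝ) else 0) * G k) := by
          apply Finset.sum_congr rfl; intro k _
          exact Finset.sum_comm
      _ = ∑ k ∈ K, (∑ m ∈ cubeF r, (-1:ℝ)^(∑ i, m i) *
            ∑ n ∈ boxF N, (if k = n + m then (1:ℝ) else 0)) * G k := by
          apply Finset.sum_congr rfl; intro k _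
          simp only [Finset.mul_sum, Finset.sum_mul]
          apply Finset.sum_congr rfl; intro m _
          apply Finset.sum_congr rfl; intro n _
          ring
      _ = ∑ k ∈ K, c k * G k := by
          apply Finset.sum_congr rfl; intro k _
          congr 1
          calc ∑ m ∈ cubeF r, (-1:ℝ)^(∑ i, m i) *
                ∑ n ∈ boxF N, (if k = n + m then (1:ℝ) else 0)
              = ∑ m ∈ cubeF r, ∏ i, ((-1:ℝ)^(m i) *
                  if m i ≤ k i ∧ k i ≤ N i + m i then 1 else 0) := by
                apply Finset.sum_congr rfl; intro m hm
                rw [Finset.prod_mul_distrib, Finset.prod_pow_eq_pow_sum]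
                congr 1
                have h1 : ∑ n ∈ boxF N, (if k = n + m then (1:ℝ) else 0)
                    = ∑ n ∈ boxF N, ∏ i, (if k i = n i + m i then (1:ℝ) else 0) := by
                  apply Finset.sum_congr rfl; intro n _
                  exact indic_prod k n m
                have hps := Finset.prod_univ_sum (fun i : Fin r => Finset.range (N i + 1))
                  (fun i a => if k i = a + m i then (1:ℝ) else 0)
                rw [h1, boxF, ← hps]
                apply Finset.prod_congr rfl; intro i _
                exact g_eval (k i) (N i) (m i)
            _ = ∏ i, ∑ t ∈ Finset.range 2,
                  ((-1:ℝ)^t * if t ≤ k i ∧ k i ≤ N i + t then 1 else 0) := by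
                have hps := Finset.prod_univ_sum (fun _ : Fin r => Finset.range 2)
                  (fun i t => (-1:ℝ)^t * if t ≤ k i ∧ k i ≤ N i + t then 1 else 0)
                rw [hps]
                rfl
            _ = c k := by
                rw [hc]
                apply Finset.prod_congr rfl; intro i _
                exact coord_eval (k i) (N i)
  have hRHS : ∑ k ∈ K, c k * G k
      = ∑ ε ∈ cubeF r, (-1:ℝ)^(∑ i, ε i) * G (fun i => ε i * (N i + 1)) := by
    calc ∑ k ∈ K, c k * G k
        = ∑ k ∈ K, ∑ ε ∈ cubeF r,
            (∏ i, ((-1:ℝ)^(ε i) * if k i = ε i * (N i + 1) then 1 else 0)) * G k := by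
          apply Finset.sum_congr rfl; intro k _
          rw [← Finset.sum_mul]
          congr 1
          have hps := Finset.prod_univ_sum (fun _ : Fin r => Finset.range 2)
            (fun i t => (-1:ℝ)^t * if k i = t * (N i + 1) then 1 else 0)
          rw [hc]
          beta_reduce
          rw [show (∏ i, ((if k i = 0 then (1:ℝ) else 0) - (if k i = N i + 1 then 1 else 0)))
              = ∏ i, ∑ t ∈ Finset.range 2, ((-1:ℝ)^t * if k i = t * (N i + 1) then 1 else 0) by
            apply Finset.prod_congr rfl; intro i _
            exact (coord_eval2 (k i) (N i)).symm]
          rw [hps]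
          rfl
      _ = ∑ ε ∈ cubeF r, ∑ k ∈ K,
            (∏ i, ((-1:ℝ)^(ε i) * if k i = ε i * (N i + 1) then 1 else 0)) * G k := by
          exact Finset.sum_comm
      _ = ∑ ε ∈ cubeF r, (-1:ℝ)^(∑ i, ε i) * G (fun i => ε i * (N i + 1)) := by
          apply Finset.sum_congr rfl; intro ε hε
          have hmem : (fun i => ε i * (N i + 1)) ∈ K := by
            simp only [cubeF, hK, Fintype.mem_piFinset, Finset.mem_range] at *
            intro i
            have h1 := hε i
            have h2 : ε i ≤ 1 := by omega
            have h3 := Nat.mul_le_mul_right (N i + 1) h2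
            omega
          have hcoef : ∀ k : Fin r → ℕ,
              (∏ i, ((-1:ℝ)^(ε i) * if k i = ε i * (N i + 1) then 1 else 0))
              = (-1:ℝ)^(∑ i, ε i) * if k = (fun i => ε i * (N i + 1)) then 1 else 0 := by
            intro k
            rw [Finset.prod_mul_distrib, Finset.prod_pow_eq_pow_sum, Finset.prod_boole]
            congr 1
            simp [funext_iff, eq_iff_iff]
          simp only [hcoef]
          simp only [ite_mul, mul_ite, mul_one, mul_zero, zero_mul, one_mul]
          rw [Finset.sum_ite_eq' K (fun i => ε i * (N i + 1))
            (fun k => (-1:ℝ)^(∑ i, ε i) * G k), if_pos hmem]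
  rw [hLHS, hRHS]

private lemma hasSum_of_fibers {α β : Type*} (d : α → β) (f : α → ℝ) (hf : ∀ a, 0 ≤ f a)
    (F : β → ℝ) (S : ℝ)
    (hfib : ∀ b, HasSum (fun a : {a // d a = b} => f a.1) (F b))
    (htot : HasSum F S) : HasSum f S := by
  classical
  have hFnn : ∀ b, 0 ≤ F b := fun b => (hfib b).nonneg (fun a : {a // d a = b} => hf a.1)
  have hsummable : Summable f := by
    refine summable_of_sum_le (c := S) (Pi.le_def.mpr hf) (fun u => ?_)
    calc ∑ a ∈ u, f a = ∑ b ∈ u.image d, ∑ a ∈ u.filter (fun a => d a = b), f a := by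
          rw [Finset.sum_fiberwise_of_maps_to (fun x hx => Finset.mem_image_of_mem d hx)]
      _ ≤ ∑ b ∈ u.image d, F b := by
          apply Finset.sum_le_sum
          intro b _
          rw [← Finset.sum_subtype_eq_sum_filter]
          exact sum_le_hasSum _ (fun a _ => hf a.1) (hfib b)
      _ ≤ S := sum_le_hasSum _ (fun b _ => hFnn b) htot
  have h1 : HasSum (fun p : Σ b, {a // d a = b} => f p.2.1) (tsum f) := by
    have := (Equiv.sigmaFiberEquiv d).hasSum_iff (f := f) (a := tsum f)
    exact this.2 hsummable.hasSum
  have h2 : HasSum F (tsum f) := h1.sigma (fun b => hfib b)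
  have h3 := hsummable.hasSum
  rwa [h2.unique htot] at h3

private lemma hasSum_fiber_finite {α β : Type*} [Fintype β] [DecidableEq β] (d : α → β)
    (f : α → ℝ) (S : β → ℝ)
    (hfib : ∀ b, HasSum (fun a : {a // d a = b} => f a.1) (S b)) :
    HasSum f (∑ b, S b) := by
  classical
  have key : ∀ b : β, HasSum (fun a => if d a = b then f a else 0) (S b) := by
    intro b
    have := (hasSum_subtype_iff_indicator (s := {a | d a = b}) (f := f) (a := S b)).1 (hfib b)
    convert this using 2 with a
    simp [Set.indicator_apply, Set.mem_setOf_eq]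
  have := hasSum_sum (s := Finset.univ) (f := fun b a => if d a = b then f a else 0)
    (a := fun b => S b) (fun b _ => key b)
  convert this using 2 with a
  beta_reduce
  rw [Finset.sum_ite_eq Finset.univ (d a) (fun _ => f a), if_pos (Finset.mem_univ _)]

private lemma tele {s C : ℝ} (hs0 : 0 < s) (hs1 : s < 1) (hC : 0 ≤ C)
    (G : (Fin r → ℕ) → ℝ)
    (hGnn : ∀ n, 0 ≤ G n)
    (hGb : ∀ n, G n ≤ C * s ^ (∑ i, n i))
    (T : (Fin r → ℕ) → ℝ)
    (hT : ∀ n, T n = ∑ m ∈ cubeF r, (-1:ℝ)^(∑ i, m i) * G (n + m))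
    (hTnn : ∀ n, 0 ≤ T n) :
    HasSum T (G 0) := by
  classical
  have hs0' : (0:ℝ) ≤ s := le_of_lt hs0
  have hpow1 : ∀ k : ℕ, s ^ k ≤ 1 := fun k => pow_le_one₀ hs0' (le_of_lt hs1)
  have hGC : ∀ n, G n ≤ C := fun n => (hGb n).trans (by
    calc C * s ^ (∑ i, n i) ≤ C * 1 := mul_le_mul_of_nonneg_left (hpow1 _) hC
      _ = C := mul_one C)
  have hboxeq : ∀ M : ℕ, ∑ n ∈ boxF (fun _ : Fin r => M), T n
      = ∑ ε ∈ cubeF r, (-1:ℝ)^(∑ i, ε i) * G (fun i => ε i * (M + 1)) := by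
    intro M
    simp only [hT]
    exact box_tele G (fun _ => M)
  have hlim : Tendsto (fun M : ℕ => ∑ n ∈ boxF (fun _ : Fin r => M), T n)
      atTop (𝓝 (G 0)) := by
    have hterm : ∀ ε ∈ cubeF r, Tendsto
        (fun M : ℕ => (-1:ℝ)^(∑ i, ε i) * G (fun i => ε i * (M + 1))) atTop
        (𝓝 (if ε = 0 then G 0 else 0)) := by
      intro ε hε
      by_cases h : ε = 0
      · subst h
        rw [if_pos rfl]
        have heq : ∀ M : ℕ, (-1:ℝ)^(∑ i, (0 : Fin r → ℕ) i) *
            G (fun i => (0 : Fin r → ℕ) i * (M + 1)) = G 0 := by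
          intro M
          simp only [Pi.zero_apply, Finset.sum_const_zero, pow_zero, one_mul, zero_mul]
          congr 1
        simp only [heq]
        exact tendsto_const_nhds
      · rw [if_neg h]
        apply squeeze_zero_norm (a := fun M : ℕ => C * s ^ (M + 1))
        · intro M
          have hnn := hGnn (fun i => ε i * (M + 1))
          rw [norm_mul, norm_pow, norm_neg, norm_one, one_pow, one_mul,
            Real.norm_of_nonneg hnn]
          refine (hGb _).trans ?_
          apply mul_le_mul_of_nonneg_left _ hC
          apply pow_le_pow_of_le_one hs0' (le_of_lt hs1)
          obtain ⟨i, hi⟩ : ∃ i, ε i ≠ 0 := by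
            by_contra hcon
            push_neg at hcon
            exact h (funext fun i => hcon i)
          calc M + 1 ≤ ε i * (M + 1) := Nat.le_mul_of_pos_left _ (Nat.pos_of_ne_zero hi)
            _ ≤ ∑ j, ε j * (M + 1) :=
                Finset.single_le_sum (f := fun j => ε j * (M + 1))
                  (fun j _ => Nat.zero_le _) (Finset.mem_univ i)
        · have h1 := tendsto_pow_atTop_nhds_zero_of_lt_one hs0' hs1
          have h2 := (h1.comp (tendsto_add_atTop_nat 1)).const_mul C
          simpa using h2
    have htend := tendsto_finset_sum (cubeF r) hterm
    have heval : ∑ ε ∈ cubeF r, (if ε = 0 then G 0 else 0) = G 0 := by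
      rw [Finset.sum_ite_eq' (cubeF r) (0 : Fin r → ℕ) (fun _ => G 0), if_pos]
      simp [cubeF, Fintype.mem_piFinset]
    rw [heval] at htend
    have hfun : (fun M : ℕ => ∑ n ∈ boxF (fun _ : Fin r => M), T n)
        = fun M => ∑ ε ∈ cubeF r, (-1:ℝ)^(∑ i, ε i) * G (fun i => ε i * (M + 1)) :=
      funext hboxeq
    rw [hfun]
    exact htend
  have hbnd : ∀ u : Finset (Fin r → ℕ), ∑ n ∈ u, T n ≤ (cubeF r).card * C := by
    intro u
    set M : ℕ := u.sup (fun n => ∑ i, n i) with hM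
    have hsub : u ⊆ boxF (fun _ => M) := by
      intro n hn
      simp only [boxF, Fintype.mem_piFinset, Finset.mem_range]
      intro i
      have h1 : n i ≤ ∑ j, n j := Finset.single_le_sum (f := fun j => n j)
        (fun j _ => Nat.zero_le _) (Finset.mem_univ i)
      have h2 : ∑ j, n j ≤ M := Finset.le_sup hn
      exact Nat.lt_succ_of_le (h1.trans h2)
    calc ∑ n ∈ u, T n ≤ ∑ n ∈ boxF (fun _ => M), T n :=
          Finset.sum_le_sum_of_subset_of_nonneg hsub (fun n _ _ => hTnn n)
      _ = ∑ ε ∈ cubeF r, (-1:ℝ)^(∑ i, ε i) * G (fun i => ε i * (M + 1)) := hboxeq M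
      _ ≤ ∑ ε ∈ cubeF r, C := by
          apply Finset.sum_le_sum
          intro ε _
          calc (-1:ℝ)^(∑ i, ε i) * G (fun i => ε i * (M + 1))
              ≤ |(-1:ℝ)^(∑ i, ε i) * G (fun i => ε i * (M + 1))| := le_abs_self _
            _ = G (fun i => ε i * (M + 1)) := by
                rw [abs_mul, abs_pow, abs_neg, abs_one, one_pow, one_mul,
                  abs_of_nonneg (hGnn _)]
            _ ≤ C := hGC _
      _ = (cubeF r).card * C := by rw [Finset.sum_const, nsmul_eq_mul]
  have hsummable : Summable T :=
    summable_of_sum_le (c := (cubeF r).card * C) (Pi.le_def.mpr hTnn) hbnd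
  have hmono : Monotone (fun M : ℕ => boxF (fun _ : Fin r => M)) := by
    intro M M' hMM' n hn
    simp only [boxF, Fintype.mem_piFinset, Finset.mem_range] at *
    intro i
    exact lt_of_lt_of_le (hn i) (by omega)
  have hexh : ∀ n : Fin r → ℕ, ∃ M : ℕ, n ∈ boxF (fun _ : Fin r => M) := by
    intro n
    refine ⟨∑ i, n i, ?_⟩
    simp only [boxF, Fintype.mem_piFinset, Finset.mem_range]
    intro i
    have : n i ≤ ∑ j, n j := Finset.single_le_sum (f := fun j => n j)
      (fun j _ => Nat.zero_le _) (Finset.mem_univ i)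
    exact Nat.lt_succ_of_le this
  have htendF : Tendsto (fun M : ℕ => boxF (fun _ : Fin r => M)) atTop atTop :=
    tendsto_atTop_finset_of_monotone hmono hexh
  have h2 : Tendsto (fun M : ℕ => ∑ n ∈ boxF (fun _ : Fin r => M), T n)
      atTop (𝓝 (∑' n, T n)) := hsummable.hasSum.comp htendF
  have hfin : (∑' n, T n) = G 0 := tendsto_nhds_unique h2 hlim
  have h3 := hsummable.hasSum
  rwa [hfin] at h3

end PoissonHelpers


open scoped InnerProductSpace ENNReal

set_option maxHeartbeats 1000000 in
/-- If the defect operator `Δ_s(V)` of a `Λ`-contraction is positive,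
then `W_s : H → ℓ²(Λ; H)`, `W_s(ξ) = (s^{|λ|} Δ_s(V)^{1/2} V_λ* ξ)_λ`, is a
well-defined linear isometry. -/
theorem poisson_kernel_isometry
    {r : ℕ} (K : KGraph r) {H : Type u}
    [NormedAddCommGroup H] [InnerProductSpace ℂ H] [CompleteSpace H]
    (V : K.Λ → H →L[ℂ] H) (hV : IsLambdaContraction K V)
    (s : ℝ) (hs : s ∈ Set.Ioo (0 : ℝ) 1)
    (D : H →L[ℂ] H) (hD : IsDefectOperator K V s D) (hDpos : D.IsPositive)
    (Dsq : H →L[ℂ] H) (hDsqPos : Dsq.IsPositive) (hDsq : Dsq ∘L Dsq = D) :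
    ∃ W : H →ₗᵢ[ℂ] lp (fun _ : K.Λ => H) 2,
      ∀ (ξ : H) (l : K.Λ),
        (W ξ : ∀ _ : K.Λ, H) l = ((s ^ K.degSum l : ℝ) : ℂ) • Dsq (adjoint (V l) ξ) := by
  classical
  obtain ⟨hs0, hs1⟩ := hs
  obtain ⟨hV1, hV2, hV3, hV4, hV5⟩ := hV
  have hs20 : (0:ℝ) < s^2 := by positivity
  have hs21 : s^2 < 1 := by nlinarith
  have hDsqSA : adjoint Dsq = Dsq := ContinuousLinearMap.isSelfAdjoint_iff'.mp hDsqPos.isSelfAdjoint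
  have hre_self : ∀ x : H, (⟪x, x⟫_ℂ).re = ‖x‖^2 := by
    intro x
    have := inner_self_eq_norm_sq (𝕜 := ℂ) x
    simpa using this
  have hre_symm : ∀ x y : H, (⟪x, y⟫_ℂ).re = (⟪y, x⟫_ℂ).re := by
    intro x y
    rw [← inner_conj_symm]
    exact Complex.conj_re _
  -- quadratic form of D equals ‖Dsq ·‖²
  have hDform : ∀ η : H, Complex.re (⟪η, D η⟫_ℂ) = ‖Dsq η‖^2 := by
    intro η
    have h1 : D η = Dsq (Dsq η) := by rw [← hDsq]; rfl
    have h2 : (⟪η, Dsq (Dsq η)⟫_ℂ) = ⟪Dsq η, Dsq η⟫_ℂ := by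
      rw [← ContinuousLinearMap.adjoint_inner_left Dsq (Dsq η) η, hDsqSA]
    rw [h1, h2]
    exact hre_self _
  -- ⟪η, A (A† η)⟫ = ‖A† η‖²
  have hinnerAA : ∀ (A : H →L[ℂ] H) (η : H),
      (⟪η, A (adjoint A η)⟫_ℂ) = ((‖adjoint A η‖:ℂ))^2 := by
    intro A η
    rw [← ContinuousLinearMap.adjoint_inner_left A (adjoint A η) η]
    exact inner_self_eq_norm_sq_to_K _
  -- Step A : fiber sums of ‖V_l† η‖² are bounded by ‖η‖²
  have hfin : ∀ (η : H) (n : Fin r → ℕ) (u : Finset {l : K.Λ // K.deg l = n}),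
      ∑ x ∈ u, ‖adjoint (V x.1) η‖^2 ≤ ‖η‖^2 := by
    intro η n u
    have hinj : Function.Injective (Subtype.val : {l : K.Λ // K.deg l = n} → K.Λ) :=
      Subtype.val_injective
    set F : Finset K.Λ := u.image Subtype.val with hF
    have hdeg : ∀ l ∈ F, K.deg l = n := by
      intro l hl
      simp only [hF, Finset.mem_image] at hl
      obtain ⟨x, _, rfl⟩ := hl
      exact x.2
    have h0 := (hV3 n F hdeg).inner_nonneg_left η
    have hsum : ∑ x ∈ u, ‖adjoint (V x.1) η‖^2
        = ∑ l ∈ F, ‖adjoint (V l) η‖^2 := by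
      rw [hF, Finset.sum_image (fun x _ y _ h => hinj h)]
    have heval : Complex.re (⟪(1 - ∑ l ∈ F, V l ∘L adjoint (V l)) η, η⟫_ℂ)
        = ‖η‖^2 - ∑ l ∈ F, ‖adjoint (V l) η‖^2 := by
      rw [ContinuousLinearMap.sub_apply, ContinuousLinearMap.one_apply,
        inner_sub_left, Complex.sub_re]
      congr 1
      · exact hre_self η
      · rw [ContinuousLinearMap.sum_apply, sum_inner, Complex.re_sum]
        apply Finset.sum_congr rfl
        intro l _
        rw [ContinuousLinearMap.comp_apply, hre_symm, hinnerAA (V l) η]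
        rw [← Complex.ofReal_pow]
        exact Complex.ofReal_re _
    have h0' : 0 ≤ (⟪(1 - ∑ l ∈ F, V l ∘L adjoint (V l)) η, η⟫_ℂ).re := by
      have h0r := (Complex.le_def.mp h0).1
      rw [Complex.zero_re] at h0r
      exact h0r
    rw [heval] at h0'
    rw [hsum]
    linarith
  have hAsummable : ∀ (η : H) (n : Fin r → ℕ),
      Summable (fun l : {l : K.Λ // K.deg l = n} => ‖adjoint (V l.1) η‖^2) :=
    fun η n => summable_of_sum_le (c := ‖η‖^2)
      (Pi.le_def.mpr (fun l => sq_nonneg _)) (hfin η n)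
  set A : H → (Fin r → ℕ) → ℝ :=
    fun η n => ∑' l : {l : K.Λ // K.deg l = n}, ‖adjoint (V l.1) η‖^2 with hA
  have hAsum : ∀ (η : H) (n : Fin r → ℕ),
      HasSum (fun l : {l : K.Λ // K.deg l = n} => ‖adjoint (V l.1) η‖^2) (A η n) :=
    fun η n => (hAsummable η n).hasSum
  have hAnn : ∀ η n, 0 ≤ A η n := fun η n => (hAsum η n).nonneg (fun l => sq_nonneg _)
  have hAle : ∀ η n, A η n ≤ ‖η‖^2 :=
    fun η n => Summable.tsum_le_of_sum_le (hAsummable η n) (fun u => hfin η n u)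
  -- Step C : A ξ 0 = ‖ξ‖²
  have hAzero : ∀ ξ : H, A ξ 0 = ‖ξ‖^2 := by
    intro ξ
    have h5 := hV5 ξ
    have h6 := (innerSL ℂ ξ).hasSum h5
    have h7 := ContinuousLinearMap.hasSum Complex.reCLM h6
    simp only [Complex.reCLM_apply] at h7
    have hterm : ∀ v : {a : K.Λ // K.IsVertex a},
        Complex.re (innerSL ℂ ξ (V v.1 ξ)) = ‖adjoint (V v.1) ξ‖^2 := by
      intro v
      obtain ⟨hsa, hidem⟩ := hV4 v.1 v.2
      have ha : adjoint (V v.1) = V v.1 := ContinuousLinearMap.isSelfAdjoint_iff'.mp hsa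
      have h8 : V v.1 ξ = V v.1 (adjoint (V v.1) ξ) := by
        conv_lhs => rw [← hidem]
        rw [ContinuousLinearMap.comp_apply, ha]
      rw [innerSL_apply_apply, h8, hinnerAA (V v.1) ξ, ← Complex.ofReal_pow]
      exact Complex.ofReal_re _
    have h9 : HasSum (fun v : {a : K.Λ // K.IsVertex a} => ‖adjoint (V v.1) ξ‖^2)
        (Complex.re (innerSL ℂ ξ ξ)) := by
      refine HasSum.congr_fun h7 ?_
      intro v
      exact (hterm v).symm
    have h10 : Complex.re (innerSL ℂ ξ ξ) = ‖ξ‖^2 := by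
      rw [innerSL_apply_apply]
      exact hre_self ξ
    rw [h10] at h9
    have h11 : HasSum (fun l : {l : K.Λ // K.deg l = 0} => ‖adjoint (V l.1) ξ‖^2)
        (‖ξ‖^2) := h9
    exact (hAsum ξ 0).unique h11
  -- Step D : composability
  have hcomp_a : ∀ (η : H) (l m : K.Λ),
      ‖adjoint (V m) (adjoint (V l) η)‖^2
        = if K.src l = K.tgt m then ‖adjoint (V (K.comp l m)) η‖^2 else 0 := by
    intro η l m
    by_cases h : K.src l = K.tgt m
    · rw [if_pos h]
      have h1 := hV2 l m h
      have h2 : adjoint (V (K.comp l m)) = adjoint (V m) ∘L adjoint (V l) := by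
        rw [← h1, ContinuousLinearMap.adjoint_comp]
      rw [h2]
      rfl
    · rw [if_neg h]
      have h1 := hV1 l m h
      have h2 : adjoint (V m) ∘L adjoint (V l) = 0 := by
        rw [← ContinuousLinearMap.adjoint_comp, h1]
        simp
      have h3 : adjoint (V m) (adjoint (V l) η) = 0 := by
        have := congrArg (fun T : H →L[ℂ] H => T η) h2
        simpa using this
      rw [h3]
      simp
  -- Step E : factorisation bijection
  have hpair : ∀ (ξ : H) (n m : Fin r → ℕ),
      HasSum (fun p : {l : K.Λ // K.deg l = n} × {μ : K.Λ // K.deg μ = m} =>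
        ‖adjoint (V p.2.1) (adjoint (V p.1.1) ξ)‖^2) (A ξ (n + m)) := by
    intro ξ n m
    set S : Set ({l : K.Λ // K.deg l = n} × {μ : K.Λ // K.deg μ = m}) :=
      {p | K.src p.1.1 = K.tgt p.2.1} with hS
    have hφdeg : ∀ p : ↥S, K.deg (K.comp p.1.1.1 p.1.2.1) = n + m := by
      intro p
      rw [K.deg_comp _ _ p.2, p.1.1.2, p.1.2.2]
    set φ : ↥S → {l : K.Λ // K.deg l = n + m} :=
      fun p => ⟨K.comp p.1.1.1 p.1.2.1, hφdeg p⟩ with hφ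
    have hbij : Function.Bijective φ := by
      constructor
      · intro p q hpq
        obtain ⟨⟨⟨lp, hlp⟩, ⟨mp, hmp⟩⟩, hp⟩ := p
        obtain ⟨⟨⟨lq, hlq⟩, ⟨mq, hmq⟩⟩, hq⟩ := q
        have h1 : K.comp lp mp = K.comp lq mq := congrArg Subtype.val hpq
        have h2 := K.factorisation (K.comp lp mp) n m
          (by rw [K.deg_comp _ _ hp, hlp, hmp])
        obtain ⟨w, hw, huniq⟩ := h2
        have e1 : (lp, mp) = w := huniq (lp, mp) ⟨hlp, hmp, hp, rfl⟩
        have e2 : (lq, mq) = w := huniq (lq, mq) ⟨hlq, hmq, hq, h1.symm⟩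
        have e3 : lp = lq ∧ mp = mq := by
          constructor
          · exact congrArg Prod.fst (e1.trans e2.symm)
          · exact congrArg Prod.snd (e1.trans e2.symm)
        apply Subtype.ext
        apply Prod.ext
        · exact Subtype.ext e3.1
        · exact Subtype.ext e3.2
      · intro l
        obtain ⟨w, ⟨hw1, hw2, hw3, hw4⟩, _⟩ := K.factorisation l.1 n m l.2
        refine ⟨⟨⟨⟨w.1, hw1⟩, ⟨w.2, hw2⟩⟩, hw3⟩, ?_⟩
        apply Subtype.ext
        exact hw4
    have htrans := ((Equiv.ofBijective φ hbij).hasSum_iff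
      (f := fun l : {l : K.Λ // K.deg l = n + m} => ‖adjoint (V l.1) ξ‖^2)
      (a := A ξ (n + m))).mpr (hAsum ξ (n + m))
    have hres : HasSum (fun p : ↥S =>
        ‖adjoint (V p.1.2.1) (adjoint (V p.1.1.1) ξ)‖^2) (A ξ (n + m)) := by
      refine HasSum.congr_fun htrans ?_
      intro p
      have hp2 : K.src p.1.1.1 = K.tgt p.1.2.1 := p.2
      have h := hcomp_a ξ p.1.1.1 p.1.2.1
      rw [if_pos hp2] at h
      exact h
    have hsupp : Function.support (fun p : {l : K.Λ // K.deg l = n} × {μ : K.Λ // K.deg μ = m} =>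
        ‖adjoint (V p.2.1) (adjoint (V p.1.1) ξ)‖^2) ⊆ S := by
      intro p hp
      by_contra hcon
      apply hp
      have hcon' : ¬ K.src p.1.1 = K.tgt p.2.1 := hcon
      have h := hcomp_a ξ p.1.1 p.2.1
      rw [if_neg hcon'] at h
      exact h
    exact (hasSum_subtype_iff_of_support_subset hsupp).mp hres
  -- Step F/G : defect operator sum per vector
  have hDQ : ∀ η : H, HasSum (fun μ : {μ : K.Λ // K.deg μ ≤ 1} =>
      (-(s^2))^(K.degSum μ.1) * ‖adjoint (V μ.1) η‖^2) (‖Dsq η‖^2) := by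
    intro η
    have h1 := (innerSL ℂ η).hasSum (hD η)
    have h2 := ContinuousLinearMap.hasSum Complex.reCLM h1
    have hterm : ∀ μ : {m : K.Λ // K.deg m ≤ 1},
        Complex.re (innerSL ℂ η ((((-(s ^ 2)) ^ K.degSum μ.1 : ℝ) : ℂ) •
            V μ.1 (adjoint (V μ.1) η)))
          = (-(s^2))^(K.degSum μ.1) * ‖adjoint (V μ.1) η‖^2 := by
      intro μ
      rw [innerSL_apply_apply, inner_smul_right, hinnerAA (V μ.1) η, ← Complex.ofReal_pow,
        ← Complex.ofReal_mul]
      exact Complex.ofReal_re _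
    simp only [Complex.reCLM_apply] at h2
    have h3 : Complex.re (innerSL ℂ η (D η)) = ‖Dsq η‖^2 := by
      rw [innerSL_apply_apply]
      exact hDform η
    rw [h3] at h2
    exact HasSum.congr_fun h2 (fun μ => (hterm μ).symm)
  -- Step H : split by degree over the cube
  have hsplit : ∀ η : H, ‖Dsq η‖^2
      = ∑ m ∈ cubeF r, (-(s^2))^(∑ i, m i) * A η m := by
    intro η
    have hdmem : ∀ μ : {μ : K.Λ // K.deg μ ≤ 1}, K.deg μ.1 ∈ cubeF r := by
      intro μ
      simp only [cubeF, Fintype.mem_piFinset, Finset.mem_range]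
      intro i
      have h := μ.2 i
      simp only [Pi.one_apply] at h
      omega
    set d : {μ : K.Λ // K.deg μ ≤ 1} → ↥(cubeF r) :=
      fun μ => ⟨K.deg μ.1, hdmem μ⟩ with hd
    have hslice : ∀ b : ↥(cubeF r),
        HasSum (fun x : {μ : {μ : K.Λ // K.deg μ ≤ 1} // d μ = b} =>
          (-(s^2))^(K.degSum x.1.1) * ‖adjoint (V x.1.1) η‖^2)
          ((-(s^2))^(∑ i, b.1 i) * A η b.1) := by
      intro b
      have hble : b.1 ≤ 1 := by
        intro i
        have hb := b.2
        simp only [cubeF, Fintype.mem_piFinset, Finset.mem_range] at hb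
        have hbi := hb i
        simp only [Pi.one_apply]
        omega
      set e : {μ : {μ : K.Λ // K.deg μ ≤ 1} // d μ = b} ≃ {μ : K.Λ // K.deg μ = b.1} :=
        { toFun := fun x => ⟨x.1.1, by
            have := congrArg Subtype.val x.2
            exact this⟩
          invFun := fun μ => ⟨⟨μ.1, by rw [μ.2]; exact hble⟩, Subtype.ext μ.2⟩
          left_inv := fun x => by
            apply Subtype.ext
            apply Subtype.ext
            rfl
          right_inv := fun μ => by
            apply Subtype.ext
            rfl } with he
      have hbase : HasSum (fun μ : {μ : K.Λ // K.deg μ = b.1} =>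
          (-(s^2))^(∑ i, b.1 i) * ‖adjoint (V μ.1) η‖^2)
          ((-(s^2))^(∑ i, b.1 i) * A η b.1) := (hAsum η b.1).mul_left _
      have := (e.hasSum_iff (f := fun μ : {μ : K.Λ // K.deg μ = b.1} =>
          (-(s^2))^(∑ i, b.1 i) * ‖adjoint (V μ.1) η‖^2)
          (a := (-(s^2))^(∑ i, b.1 i) * A η b.1)).mpr hbase
      refine HasSum.congr_fun this ?_
      intro x
      have hdeg : K.deg x.1.1 = b.1 := congrArg Subtype.val x.2
      have hds : K.degSum x.1.1 = ∑ i, b.1 i := by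
        rw [KGraph.degSum, hdeg]
      rw [Function.comp]
      beta_reduce
      rw [hds]
      rfl
    have htotal := hasSum_fiber_finite d
      (fun μ : {μ : K.Λ // K.deg μ ≤ 1} =>
        (-(s^2))^(K.degSum μ.1) * ‖adjoint (V μ.1) η‖^2)
      (fun b => (-(s^2))^(∑ i, b.1 i) * A η b.1) hslice
    have huniq := (hDQ η).unique htotal
    rw [huniq]
    rw [← Finset.sum_coe_sort (cubeF r) (fun m => (-(s^2))^(∑ i, m i) * A η m)]
  -- Step F7 : grouped pair sums
  have hAgroup : ∀ (ξ : H) (n m : Fin r → ℕ),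
      HasSum (fun l : {l : K.Λ // K.deg l = n} => A (adjoint (V l.1) ξ) m)
        (A ξ (n + m)) := by
    intro ξ n m
    exact (hpair ξ n m).prod_fiberwise (fun l => hAsum (adjoint (V l.1) ξ) m)
  -- Step I : fiber sums of ‖Dsq V_l† ξ‖²
  have hfiberE : ∀ (ξ : H) (n : Fin r → ℕ),
      HasSum (fun l : {l : K.Λ // K.deg l = n} => ‖Dsq (adjoint (V l.1) ξ)‖^2)
        (∑ m ∈ cubeF r, (-(s^2))^(∑ i, m i) * A ξ (n + m)) := by
    intro ξ n
    have hterms : ∀ m ∈ cubeF r,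
        HasSum (fun l : {l : K.Λ // K.deg l = n} =>
          (-(s^2))^(∑ i, m i) * A (adjoint (V l.1) ξ) m)
          ((-(s^2))^(∑ i, m i) * A ξ (n + m)) :=
      fun m _ => (hAgroup ξ n m).mul_left _
    have := hasSum_sum (s := cubeF r)
      (f := fun m (l : {l : K.Λ // K.deg l = n}) =>
        (-(s^2))^(∑ i, m i) * A (adjoint (V l.1) ξ) m)
      (a := fun m => (-(s^2))^(∑ i, m i) * A ξ (n + m)) hterms
    refine HasSum.congr_fun this ?_
    intro l
    exact (hsplit (adjoint (V l.1) ξ)).symm ▸ rfl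
  -- Step J : telescoping
  have hkey : ∀ ξ : H, HasSum
      (fun l : K.Λ => (s^2)^(K.degSum l) * ‖Dsq (adjoint (V l) ξ)‖^2) (‖ξ‖^2) := by
    intro ξ
    set G : (Fin r → ℕ) → ℝ := fun n => (s^2)^(∑ i, n i) * A ξ n with hG
    set T : (Fin r → ℕ) → ℝ :=
      fun n => ∑ m ∈ cubeF r, (-1:ℝ)^(∑ i, m i) * G (n + m) with hT
    have hTe : ∀ n, T n
        = (s^2)^(∑ i, n i) * ∑ m ∈ cubeF r, (-(s^2))^(∑ i, m i) * A ξ (n + m) := by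
      intro n
      rw [hT, Finset.mul_sum]
      apply Finset.sum_congr rfl
      intro m _
      rw [hG]
      beta_reduce
      have h1 : ∑ i, (n + m) i = (∑ i, n i) + (∑ i, m i) := by
        simp [Finset.sum_add_distrib]
      rw [h1, pow_add, neg_pow]
      ring
    have hTfiber : ∀ n : Fin r → ℕ,
        HasSum (fun l : {l : K.Λ // K.deg l = n} =>
          (s^2)^(K.degSum l.1) * ‖Dsq (adjoint (V l.1) ξ)‖^2) (T n) := by
      intro n
      have h1 := (hfiberE ξ n).mul_left ((s^2)^(∑ i, n i))
      rw [← hTe n] at h1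
      refine HasSum.congr_fun h1 ?_
      intro l
      have : K.degSum l.1 = ∑ i, n i := by rw [KGraph.degSum, l.2]
      rw [this]
    have hG0 : G 0 = ‖ξ‖^2 := by
      rw [hG]
      beta_reduce
      rw [hAzero ξ]
      simp
    have htele : HasSum T (G 0) := by
      refine tele hs20 hs21 (sq_nonneg ‖ξ‖) G ?_ ?_ T (fun n => rfl) ?_
      · intro n
        rw [hG]
        exact mul_nonneg (pow_nonneg (le_of_lt hs20) _) (hAnn ξ n)
      · intro n
        rw [hG]
        beta_reduce
        rw [mul_comm (‖ξ‖^2)]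
        exact mul_le_mul_of_nonneg_left (hAle ξ n) (pow_nonneg (le_of_lt hs20) _)
      · intro n
        have := (hTfiber n).nonneg (fun l => mul_nonneg (pow_nonneg (le_of_lt hs20) _)
          (sq_nonneg _))
        exact this
    rw [hG0] at htele
    exact hasSum_of_fibers K.deg
      (fun l : K.Λ => (s^2)^(K.degSum l) * ‖Dsq (adjoint (V l) ξ)‖^2)
      (fun l => mul_nonneg (pow_nonneg (le_of_lt hs20) _) (sq_nonneg _))
      T (‖ξ‖^2) hTfiber htele
  -- Step L : assemble the isometry
  have htR : (2:ℝ≥0∞).toReal = 2 := by norm_num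
  have hrpow : ∀ x : H, ‖x‖ ^ (2:ℝ≥0∞).toReal = ‖x‖^2 := by
    intro x
    rw [htR, show ((2:ℝ)) = ((2:ℕ):ℝ) by norm_num, Real.rpow_natCast]
  have hnorm2 : ∀ (ξ : H) (l : K.Λ),
      ‖((s ^ K.degSum l : ℝ) : ℂ) • Dsq (adjoint (V l) ξ)‖^2
        = (s^2)^(K.degSum l) * ‖Dsq (adjoint (V l) ξ)‖^2 := by
    intro ξ l
    rw [norm_smul, mul_pow, Complex.norm_real,
      Real.norm_of_nonneg (pow_nonneg hs0.le _)]
    congr 1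
    rw [← pow_mul, ← pow_mul, mul_comm]
  have hmem : ∀ ξ : H,
      Memℓp (fun l : K.Λ => ((s ^ K.degSum l : ℝ) : ℂ) • Dsq (adjoint (V l) ξ)) 2 := by
    intro ξ
    apply memℓp_gen
    refine Summable.congr (hkey ξ).summable ?_
    intro l
    rw [hrpow, hnorm2]
  have hlpnorm : ∀ ξ : H,
      ‖(⟨fun l : K.Λ => ((s ^ K.degSum l : ℝ) : ℂ) • Dsq (adjoint (V l) ξ), hmem ξ⟩ :
        lp (fun _ : K.Λ => H) 2)‖ = ‖ξ‖ := by
    intro ξ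
    rw [lp.norm_eq_tsum_rpow (by norm_num) _]
    have h1 : ∑' l : K.Λ,
        ‖((s ^ K.degSum l : ℝ) : ℂ) • Dsq (adjoint (V l) ξ)‖ ^ (2:ℝ≥0∞).toReal
        = ‖ξ‖^2 := by
      have h2 : HasSum (fun l : K.Λ =>
          ‖((s ^ K.degSum l : ℝ) : ℂ) • Dsq (adjoint (V l) ξ)‖ ^ (2:ℝ≥0∞).toReal)
          (‖ξ‖^2) := by
        refine HasSum.congr_fun (hkey ξ) ?_
        intro l
        rw [hrpow, hnorm2]
      exact h2.tsum_eq
    have h3 : (∑' l : K.Λ,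
        ‖(⟨fun l : K.Λ => ((s ^ K.degSum l : ℝ) : ℂ) • Dsq (adjoint (V l) ξ), hmem ξ⟩ :
          lp (fun _ : K.Λ => H) 2) l‖ ^ (2:ℝ≥0∞).toReal) = ‖ξ‖^2 := h1
    rw [h3, htR, show (‖ξ‖^2 : ℝ) = ‖ξ‖ ^ ((2:ℕ):ℝ) from (Real.rpow_natCast _ 2).symm,
      ← Real.rpow_mul (norm_nonneg ξ)]
    norm_num
  set Wfun : H → lp (fun _ : K.Λ => H) 2 := fun ξ =>
    (⟨fun l : K.Λ => ((s ^ K.degSum l : ℝ) : ℂ) • Dsq (adjoint (V l) ξ), hmem ξ⟩ :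
      lp (fun _ : K.Λ => H) 2) with hWfun
  have hadd : ∀ x y : H, Wfun (x + y) = Wfun x + Wfun y := by
    intro x y
    apply Subtype.ext
    funext l
    show ((s ^ K.degSum l : ℝ) : ℂ) • Dsq (adjoint (V l) (x + y)) = _
    rw [map_add, map_add, smul_add]
    rfl
  have hsmul : ∀ (c : ℂ) (x : H), Wfun (c • x) = (RingHom.id ℂ) c • Wfun x := by
    intro c x
    apply Subtype.ext
    funext l
    show ((s ^ K.degSum l : ℝ) : ℂ) • Dsq (adjoint (V l) (c • x)) = _
    rw [map_smul, map_smul, smul_comm]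
    rfl
  exact ⟨⟨⟨⟨Wfun, hadd⟩, hsmul⟩, hlpnorm⟩, fun ξ l => rfl⟩
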